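/- Assume X₁,…,X_d and H are Hermitian n×n complex matrices, that the X_j commute with each other, and that Z = √(X₁² + ⋯ + X_d²) (the positive semidefinite square root) is invertible. If H₀ is Hermitian and ‖Z⁻¹(HH₀ + H₀H + H₀²)Z⁻¹‖ ≤ C for some constant C, then in the Loewner (positive semidefinite) order, (1−C)·Q₀(X₁,…,X_d,H) ≤ Q₀(X₁,…,X_d,H+H₀) ≤ (1+C)·Q₀(X₁,…,X_d,H), where Q₀(X₁,…,X_d,H) = Σ_j X_j² + H² = Z² + H². -/

import Mathlib

open Matrix
open scoped ComplexOrder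

/-- The ℓ²-induced operator norm of a square matrix. -/
noncomputable def opNorm {m : Type*} [Fintype m] [DecidableEq m] (A : Matrix m m ℂ) : ℝ :=
  ‖Matrix.toEuclideanCLM (𝕜 := ℂ) A‖


lemma clm_nonneg_posSemidef {n : ℕ} {A : Matrix (Fin n) (Fin n) ℂ}
    (h : 0 ≤ toEuclideanCLM (𝕜 := ℂ) A) : A.PosSemidef := by
  set T := toEuclideanCLM (𝕜 := ℂ) A with hT
  have hpos : T.IsPositive := (ContinuousLinearMap.nonneg_iff_isPositive T).mp h
  have hsa : IsSelfAdjoint T := hpos.isSelfAdjoint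
  have hherm : A.IsHermitian := by
    have h1 : toEuclideanCLM (𝕜 := ℂ) (star A) = star T := map_star _ A
    have h2 : star A = A := EquivLike.injective (toEuclideanCLM (𝕜 := ℂ)) (h1.trans hsa)
    exact (by simpa [Matrix.star_eq_conjTranspose] using h2 : Aᴴ = A)
  refine PosSemidef.of_dotProduct_mulVec_nonneg hherm fun x => ?_
  rw [ContinuousLinearMap.isPositive_iff_complex] at hpos
  set y : EuclideanSpace ℂ (Fin n) := (WithLp.equiv 2 (Fin n → ℂ)).symm x with hy
  have hTy : T y = (WithLp.equiv 2 (Fin n → ℂ)).symm (A *ᵥ x) := by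
    rw [hy, hT]; rfl
  have hdot : star x ⬝ᵥ (A *ᵥ x) = inner ℂ y (T y) := by
    rw [hTy, hy]; exact dotProduct_comm _ _
  obtain ⟨hre, hnn⟩ := hpos y
  have hconj : (inner ℂ y (T y) : ℂ) = (RCLike.re (inner ℂ (T y) y : ℂ) : ℂ) := by
    rw [← inner_conj_symm, ← hre]
    simp
  rw [hdot, hconj]
  exact_mod_cast hnn

set_option maxHeartbeats 1000000 in
set_option synthInstance.maxHeartbeats 1000000 in
lemma herm_opNorm_le_psd {n : ℕ} {A : Matrix (Fin n) (Fin n) ℂ} (hA : A.IsHermitian) {C : ℝ}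
    (h : ‖toEuclideanCLM (𝕜 := ℂ) A‖ ≤ C) :
    (C • (1 : Matrix (Fin n) (Fin n) ℂ) - A).PosSemidef ∧
      (C • (1 : Matrix (Fin n) (Fin n) ℂ) + A).PosSemidef := by
  rcases Nat.eq_zero_or_pos n with rfl | hpos
  · constructor <;>
      exact ⟨Subsingleton.elim _ _, fun x => by simp [Subsingleton.elim x 0]⟩
  haveI : Nontrivial (EuclideanSpace ℂ (Fin n)) :=
    Module.nontrivial_of_finrank_pos (R := ℂ) (by rw [finrank_euclideanSpace_fin]; exact hpos)
  set T := toEuclideanCLM (𝕜 := ℂ) A with hT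
  have hsa : _root_.IsSelfAdjoint T := by
    have h1 : toEuclideanCLM (𝕜 := ℂ) (star A) = star T := map_star _ A
    rw [_root_.IsSelfAdjoint, ← h1, Matrix.star_eq_conjTranspose, hA.eq, hT]
  have hCLM : toEuclideanCLM (𝕜 := ℂ) (C • (1 : Matrix (Fin n) (Fin n) ℂ))
      = algebraMap ℝ (EuclideanSpace ℂ (Fin n) →L[ℂ] EuclideanSpace ℂ (Fin n)) C := by
    rw [← algebraMap_smul ℂ C (1 : Matrix (Fin n) (Fin n) ℂ), _root_.map_smul, _root_.map_one,
      algebraMap_smul ℂ C (1 : EuclideanSpace ℂ (Fin n) →L[ℂ] EuclideanSpace ℂ (Fin n)),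
      Algebra.algebraMap_eq_smul_one]
  have h1 : T ≤ algebraMap ℝ _ C :=
    le_algebraMap_of_spectrum_le
      (fun r hr => (Real.le_norm_self r).trans ((spectrum.norm_le_norm_of_mem hr).trans h)) hsa
  have h2 : algebraMap ℝ _ (-C) ≤ T := by
    refine algebraMap_le_of_le_spectrum (fun r hr => ?_) hsa
    have h3 : ‖r‖ ≤ C := (spectrum.norm_le_norm_of_mem hr).trans h
    rw [Real.norm_eq_abs] at h3
    have := neg_abs_le r
    linarith
  constructor
  · apply clm_nonneg_posSemidef
    rw [map_sub, hCLM]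
    rwa [sub_nonneg]
  · apply clm_nonneg_posSemidef
    rw [map_add, hCLM]
    have h4 : (0 : _) ≤ T - algebraMap ℝ _ (-C) := sub_nonneg.mpr h2
    rwa [map_neg, sub_neg_eq_add, add_comm] at h4

lemma posSemidef_real_smul {n : ℕ} {A : Matrix (Fin n) (Fin n) ℂ} (hA : A.PosSemidef)
    {c : ℝ} (hc : 0 ≤ c) : (c • A).PosSemidef := by
  refine PosSemidef.of_dotProduct_mulVec_nonneg ?_ ?_
  · show (c • A)ᴴ = c • A
    have h1 : (c • A)ᴴ = c • Aᴴ := by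
      ext i j
      simp [Matrix.conjTranspose_apply, Complex.real_smul, Complex.conj_ofReal]
    rw [h1, hA.1]
  · intro x
    have h0 := hA.dotProduct_mulVec_nonneg x
    have h2 : star x ⬝ᵥ (c • A) *ᵥ x = (c : ℂ) * (star x ⬝ᵥ A *ᵥ x) := by
      rw [Matrix.smul_mulVec, dotProduct_smul, Complex.real_smul]
    rw [h2]
    exact mul_nonneg (by exact_mod_cast hc) h0

set_option maxHeartbeats 1000000 in
/-- with commuting Hermitian `X₁,…,X_d`, Hermitian `H`, `Z` the
invertible positive semidefinite square root of `Σ_j X_j²`, and Hermitian `H₀`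
satisfying `‖Z⁻¹(HH₀ + H₀H + H₀²)Z⁻¹‖ ≤ C`, the quadratic composite operators
at the origin satisfy `(1−C)·Q₀(X,H) ≤ Q₀(X,H+H₀) ≤ (1+C)·Q₀(X,H)` in the
Loewner order. -/
theorem quadratic_operator_truncation_loewner {n d : ℕ}
    (X : Fin d → Matrix (Fin n) (Fin n) ℂ) (hX : ∀ j, (X j).IsHermitian)
    (hXcomm : ∀ j k, X j * X k = X k * X j)
    (H : Matrix (Fin n) (Fin n) ℂ) (hH : H.IsHermitian)
    (Z : Matrix (Fin n) (Fin n) ℂ) (hZpsd : Z.PosSemidef)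
    (hZsq : Z ^ 2 = ∑ j, (X j) ^ 2) (hZinv : IsUnit Z)
    (H₀ : Matrix (Fin n) (Fin n) ℂ) (hH₀ : H₀.IsHermitian)
    (C : ℝ) (hC : opNorm (Z⁻¹ * (H * H₀ + H₀ * H + H₀ ^ 2) * Z⁻¹) ≤ C) :
    ((∑ j, (X j) ^ 2 + (H + H₀) ^ 2) - (1 - C) • (∑ j, (X j) ^ 2 + H ^ 2)).PosSemidef ∧
      ((1 + C) • (∑ j, (X j) ^ 2 + H ^ 2) - (∑ j, (X j) ^ 2 + (H + H₀) ^ 2)).PosSemidef := by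
  have hC0 : 0 ≤ C := le_trans (norm_nonneg _) hC
  set E := H * H₀ + H₀ * H + H₀ ^ 2 with hE
  have hEherm : Eᴴ = E := by
    rw [hE]
    simp only [conjTranspose_add, conjTranspose_mul, conjTranspose_pow, hH.eq, hH₀.eq]
    abel
  have hdet : IsUnit Z.det := (Matrix.isUnit_iff_isUnit_det Z).mp hZinv
  have hZZ : Z * Z⁻¹ = 1 := Matrix.mul_nonsing_inv Z hdet
  have hZZ' : Z⁻¹ * Z = 1 := Matrix.nonsing_inv_mul Z hdet
  have hZinvH : (Z⁻¹)ᴴ = Z⁻¹ := by rw [conjTranspose_nonsing_inv, hZpsd.1.eq]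
  have hMherm : (Z⁻¹ * E * Z⁻¹).IsHermitian := by
    show (Z⁻¹ * E * Z⁻¹)ᴴ = Z⁻¹ * E * Z⁻¹
    rw [conjTranspose_mul, conjTranspose_mul, hZinvH, hEherm, mul_assoc]
  obtain ⟨h1, h2⟩ := herm_opNorm_le_psd hMherm hC
  have hZMZ : Z * (Z⁻¹ * E * Z⁻¹) * Z = E := by
    calc Z * (Z⁻¹ * E * Z⁻¹) * Z = (Z * Z⁻¹) * E * (Z⁻¹ * Z) := by
          simp only [mul_assoc]
      _ = E := by rw [hZZ, hZZ', one_mul, mul_one]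
  have k1 : (C • Z ^ 2 - E).PosSemidef := by
    have h1' := h1.mul_mul_conjTranspose_same Z
    rwa [hZpsd.1.eq, mul_sub, sub_mul, mul_smul_comm, smul_mul_assoc, mul_one, hZMZ,
      ← pow_two] at h1'
  have k2 : (C • Z ^ 2 + E).PosSemidef := by
    have h2' := h2.mul_mul_conjTranspose_same Z
    rwa [hZpsd.1.eq, mul_add, add_mul, mul_smul_comm, smul_mul_assoc, mul_one, hZMZ,
      ← pow_two] at h2'
  have hH2 : (C • H ^ 2).PosSemidef := by
    refine posSemidef_real_smul ?_ hC0
    have := Matrix.posSemidef_conjTranspose_mul_self H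
    rwa [hH.eq, ← pow_two] at this
  have hsq : (H + H₀) ^ 2 = H ^ 2 + E := by rw [hE]; noncomm_ring
  constructor
  · have geq : (∑ j, (X j) ^ 2 + (H + H₀) ^ 2) - (1 - C) • (∑ j, (X j) ^ 2 + H ^ 2)
        = (C • Z ^ 2 + E) + C • H ^ 2 := by
      rw [← hZsq, hsq]
      module
    rw [geq]
    exact k2.add hH2
  · have geq : (1 + C) • (∑ j, (X j) ^ 2 + H ^ 2) - (∑ j, (X j) ^ 2 + (H + H₀) ^ 2)
        = (C • Z ^ 2 - E) + C • H ^ 2 := by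
      rw [← hZsq, hsq]
      module
    rw [geq]
    exact k1.add hH2
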